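/- Let A ⊕ B = ℤ_M with 0 ∈ B, and let p be a prime with p^n ‖ M. Suppose a_0, a_1 ∈ A are distinct with p^n | a_0 − a_1, and both fibers a_0 * F_p and a_1 * F_p split with parity (B, A). Then Σ_A(a_0 * F_p) and Σ_A(a_1 * F_p) are disjoint. -/
import Mathlib

/-- `A ⊕ B = ℤ_M`: every element of `ZMod M` has a unique representation `a + b`
with `a ∈ A`, `b ∈ B`. -/
def IsTiling (M : ℕ) (A B : Finset (ZMod M)) : Prop :=
  ∀ z : ZMod M, ∃! ab : ZMod M × ZMod M, ab.1 ∈ A ∧ ab.2 ∈ B ∧ ab.1 + ab.2 = z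

/-- The fiber `x * F_p = {x + ν·(M/p) : 0 ≤ ν < p}` in the `p` direction. -/
def fiberSet (M p : ℕ) (x : ZMod M) : Set (ZMod M) :=
  {z | ∃ ν < p, z = x + ((ν * (M / p) : ℕ) : ZMod M)}

/-- `Σ_A(Z)`: the elements of `A` used in representations of elements of `Z`
in the tiling `A ⊕ B`. -/
def SigmaSet (M : ℕ) (A B : Finset (ZMod M)) (Z : Set (ZMod M)) : Set (ZMod M) :=
  {a | a ∈ A ∧ ∃ b ∈ B, a + b ∈ Z}

/-- `Z` splits with parity `(A, B)`: `p^n` divides all differences of elements of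
`Σ_A(Z)`, and `p^{n-1}` exactly divides differences of distinct elements of `Σ_B(Z)`
(divisibility of differences measured on canonical representatives in `ZMod M`). -/
def SplitsParity (M p n : ℕ) (A B : Finset (ZMod M)) (Z : Set (ZMod M)) : Prop :=
  (∀ a ∈ SigmaSet M A B Z, ∀ a' ∈ SigmaSet M A B Z, (p ^ n : ℕ) ∣ ((a - a' : ZMod M)).val) ∧
  (∀ b ∈ SigmaSet M B A Z, ∀ b' ∈ SigmaSet M B A Z, b ≠ b' →
    (p ^ (n - 1) : ℕ) ∣ ((b - b' : ZMod M)).val ∧ ¬ (p ^ n : ℕ) ∣ ((b - b' : ZMod M)).val)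

theorem stmt10 (M p n : ℕ) [NeZero M] (hp : p.Prime) (hn : 1 ≤ n)
    (hpn : p ^ n ∣ M) (hpn' : ¬ p ^ (n + 1) ∣ M)
    (A B : Finset (ZMod M)) (h : IsTiling M A B) (h0B : (0 : ZMod M) ∈ B)
    (a0 a1 : ZMod M) (ha0 : a0 ∈ A) (ha1 : a1 ∈ A) (hne : a0 ≠ a1)
    (hplane : (p ^ n : ℕ) ∣ ((a0 - a1 : ZMod M)).val)
    (hs0 : SplitsParity M p n B A (fiberSet M p a0))
    (hs1 : SplitsParity M p n B A (fiberSet M p a1)) :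
    SigmaSet M A B (fiberSet M p a0) ∩ SigmaSet M A B (fiberSet M p a1) = ∅ := by
  rw [Set.eq_empty_iff_forall_notMem]
  rintro a ⟨⟨haA, b, hbB, hab⟩, ⟨-, b', hb'B, hab'⟩⟩
  obtain ⟨ν, hν, hab⟩ := hab
  obtain ⟨ν', hν', hab'⟩ := hab'
  -- the reduction map to `ZMod (p^n)`
  set φ : ZMod M →+* ZMod (p ^ n) := ZMod.castHom hpn (ZMod (p ^ n)) with hφ
  have key : ∀ x : ZMod M, (p ^ n : ℕ) ∣ x.val ↔ φ x = 0 := by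
    intro x
    rw [hφ, ZMod.castHom_apply, ← ZMod.natCast_val, ZMod.natCast_eq_zero_iff]
  -- `0` belongs to both `Σ_B` sets
  have h00 : (0 : ZMod M) ∈ SigmaSet M B A (fiberSet M p a0) :=
    ⟨h0B, a0, ha0, ⟨0, hp.pos, by simp⟩⟩
  have h01 : (0 : ZMod M) ∈ SigmaSet M B A (fiberSet M p a1) :=
    ⟨h0B, a1, ha1, ⟨0, hp.pos, by simp⟩⟩
  have hbSig : b ∈ SigmaSet M B A (fiberSet M p a0) :=
    ⟨hbB, a, haA, ⟨ν, hν, by rw [add_comm]; exact hab⟩⟩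
  have hb'Sig : b' ∈ SigmaSet M B A (fiberSet M p a1) :=
    ⟨hb'B, a, haA, ⟨ν', hν', by rw [add_comm]; exact hab'⟩⟩
  have hb0 : φ b = 0 := by
    have := hs0.1 b hbSig 0 h00
    rwa [sub_zero, key] at this
  have hb'0 : φ b' = 0 := by
    have := hs1.1 b' hb'Sig 0 h01
    rwa [sub_zero, key] at this
  have ha01 : φ a0 = φ a1 := by
    have := (key _).mp hplane
    rw [map_sub, sub_eq_zero] at this
    exact this
  -- conclude ν = ν'
  have hcast : ((ν * (M / p) : ℕ) : ZMod (p ^ n)) = ((ν' * (M / p) : ℕ) : ZMod (p ^ n)) := by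
    have hd : b - b' = (a0 - a1) + (((ν * (M / p) : ℕ) : ZMod M) - ((ν' * (M / p) : ℕ) : ZMod M)) := by
      linear_combination hab - hab'
    have := congrArg φ hd
    simp only [map_sub, map_add, hb0, hb'0, ha01, map_natCast] at this
    linear_combination -this
  have hmod : ((p : ℤ) ^ n) ∣ ((ν' : ℤ) * (M / p : ℕ) - (ν : ℤ) * (M / p : ℕ)) := by
    have := (ZMod.natCast_eq_natCast_iff _ _ _).mp hcast
    have := this.dvd
    push_cast at this ⊢
    convert this using 2
  -- arithmetic: M / p = p^(n-1) * m with p ∤ m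
  obtain ⟨m, hm⟩ := hpn
  have hpm : ¬ p ∣ m := by
    intro ⟨k, hk⟩
    exact hpn' ⟨k, by rw [hm, hk]; ring⟩
  have hMp : M / p = p ^ (n - 1) * m := by
    have : M = p * (p ^ (n - 1) * m) := by
      rw [hm]
      rw [show p ^ n = p * p ^ (n - 1) by rw [← pow_succ']; congr 1; omega]
      ring
    rw [this, Nat.mul_div_cancel_left _ hp.pos]
  have hνν' : ν = ν' := by
    rw [hMp] at hmod
    have h2 : ((p : ℤ) ^ (n - 1) * p) ∣ ((p : ℤ) ^ (n - 1) * (((ν' : ℤ) - ν) * m)) := by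
      rw [show ((p : ℤ) ^ (n - 1) * p) = (p : ℤ) ^ n by rw [← pow_succ]; congr 1; omega]
      convert hmod using 1
      push_cast
      ring
    have h3 : (p : ℤ) ∣ ((ν' : ℤ) - ν) * m := by
      have hne0 : ((p : ℤ) ^ (n - 1)) ≠ 0 := by
        exact pow_ne_zero _ (Int.natCast_ne_zero.mpr hp.pos.ne')
      exact (mul_dvd_mul_iff_left hne0).mp h2
    have h4 : (p : ℤ) ∣ ((ν' : ℤ) - ν) := by
      rcases (Int.Prime.dvd_mul' (by exact_mod_cast hp) h3) with h4 | h4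
      · exact h4
      · exact absurd (Int.ofNat_dvd.mp (by exact_mod_cast h4)) hpm
    have : ((ν' : ℤ) - ν) = 0 := by
      refine Int.eq_zero_of_abs_lt_dvd h4 ?_
      rw [abs_sub_lt_iff]
      constructor <;> omega
    omega
  -- two representations of a1 + b
  have hfin : a1 + b = a0 + b' := by
    subst hνν'
    linear_combination hab - hab'
  obtain ⟨w, -, huniq⟩ := h (a1 + b)
  have e1 : ((a1, b) : ZMod M × ZMod M) = w := huniq _ ⟨ha1, hbB, rfl⟩
  have e2 : ((a0, b') : ZMod M × ZMod M) = w := huniq _ ⟨ha0, hb'B, hfin.symm⟩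
  exact hne (congrArg Prod.fst (e2.trans e1.symm))
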